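/- Define g(δ) = e^{(Z − δr)/c} + 2^{δ+1} − 2 for real δ, with r, c, Z > 0. Then g is strictly convex and its unique minimizer over ℝ is δ̄ = (c·ln(r/(c·ln 2)) + Z − c·ln 2)/(r + c·ln 2). Moreover the gap between the minimizer of g and the minimizer of f(δ) = e^{(Z−δr)/c−1} + 2^{δ+1} − 1 equals ε = c/(r + c·ln 2) = 1/(r/c + ln 2), and ε ∈ (0, 1.5). -/

import Mathlib

open Real Set

lemma strictConvexOn_exp_affine (p q : ℝ) (hp : p ≠ 0) :
    StrictConvexOn ℝ Set.univ (fun x : ℝ => Real.exp (p * x + q)) := by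
  refine ⟨convex_univ, fun x _ y _ hxy a b ha hb hab => ?_⟩
  have harg : p * x + q ≠ p * y + q := by
    intro h
    exact hxy (mul_left_cancel₀ hp (by linarith))
  have := strictConvexOn_exp.2 (Set.mem_univ (p * x + q)) (Set.mem_univ (p * y + q))
    harg ha hb hab
  simp only [smul_eq_mul] at this ⊢
  have heq : p * (a * x + b * y) + q = a * (p * x + q) + b * (p * y + q) := by
    linear_combination (-q) * hab
  rw [heq]
  exact this

/-- The upper-bounding function `g(δ) = e^((Z - δr)/c) + 2^(δ+1) - 2` is strictly
convex with unique minimizer `δ̄ = (c·ln(r/(c·ln 2)) + Z - c·ln 2)/(r + c·ln 2)`;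
moreover the gap between `δ̄` and the minimizer
`δ̲ = (c·ln(r/(c·ln 2)) + Z - c(1 + ln 2))/(r + c·ln 2)` of the lower-bounding
function equals `ε = c/(r + c·ln 2) = 1/(r/c + ln 2) ∈ (0, 1.5)`. -/
theorem ub_function_minimizer_and_gap (r c Z : ℝ)
    (hr : 0 < r) (hc : 0 < c) (hZ : 0 < Z)
    (g : ℝ → ℝ)
    (hg : ∀ δ : ℝ, g δ = Real.exp ((Z - δ * r) / c) + (2 : ℝ) ^ (δ + 1) - 2) :
    StrictConvexOn ℝ Set.univ g ∧
    (∀ δ : ℝ,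
      δ ≠ (c * Real.log (r / (c * Real.log 2)) + Z - c * Real.log 2)
            / (r + c * Real.log 2) →
      g ((c * Real.log (r / (c * Real.log 2)) + Z - c * Real.log 2)
            / (r + c * Real.log 2)) < g δ) ∧
    ((c * Real.log (r / (c * Real.log 2)) + Z - c * Real.log 2) / (r + c * Real.log 2)
      - (c * Real.log (r / (c * Real.log 2)) + Z - c * (1 + Real.log 2))
          / (r + c * Real.log 2)
      = c / (r + c * Real.log 2)) ∧
    c / (r + c * Real.log 2) = 1 / (r / c + Real.log 2) ∧
    0 < c / (r + c * Real.log 2) ∧ c / (r + c * Real.log 2) < 1.5 := by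
  have hL : 0 < Real.log 2 := Real.log_pos one_lt_two
  set L : ℝ := Real.log 2 with hLdef
  have hD : 0 < r + c * L := by positivity
  have h2rpow : ∀ x : ℝ, (2 : ℝ) ^ x = Real.exp (L * x) :=
    fun x => Real.rpow_def_of_pos two_pos x
  -- the minimizer
  set δb : ℝ := (c * Real.log (r / (c * L)) + Z - c * L) / (r + c * L) with hδb
  have hδbeq : δb * (r + c * L) = c * Real.log (r / (c * L)) + Z - c * L := by
    rw [hδb, div_mul_cancel₀ _ (ne_of_gt hD)]
  -- rewrite g
  have hgform : ∀ δ : ℝ, g δ = Real.exp ((Z - δ * r) / c) + Real.exp (L * (δ + 1)) - 2 := by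
    intro δ
    rw [hg, h2rpow]
  constructor
  · -- strict convexity
    have hgfun : g = (fun x : ℝ => Real.exp ((-(r / c)) * x + Z / c))
        + ((fun x : ℝ => Real.exp (L * x + L)) + fun _ : ℝ => (-2 : ℝ)) := by
      funext x
      have harg : (Z - x * r) / c = (-(r / c)) * x + Z / c := by
        field_simp
        ring
      simp only [Pi.add_apply, hgform x, harg, mul_add, mul_one]
      ring
    rw [hgfun]
    refine (strictConvexOn_exp_affine _ _ (neg_ne_zero.mpr (by positivity))).add
      ((strictConvexOn_exp_affine L L (ne_of_gt hL)).add_const (-2))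
  refine ⟨?_, ?_, ?_, div_pos hc hD, ?_⟩
  · -- unique minimizer
    intro δ hδ
    have hrc : r / (c * L) > 0 := by positivity
    -- key stationarity equation
    have hlogkey : Real.log (r / (c * L)) + (Z - δb * r) / c = L + L * δb := by
      have hlog : c * (Real.log (r / (c * L)) + (Z - δb * r) / c)
          = c * (L + L * δb) := by
        have : c * ((Z - δb * r) / c) = Z - δb * r := by field_simp
        rw [mul_add, mul_add, this]
        linarith [hδbeq]
      exact mul_left_cancel₀ (ne_of_gt hc) hlog
    have key : (r / c) * Real.exp ((Z - δb * r) / c) = L * Real.exp (L * (δb + 1)) := by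
      have h1 : r / c = L * Real.exp (Real.log (r / (c * L))) := by
        rw [Real.exp_log hrc]
        field_simp
      rw [h1, mul_assoc, ← Real.exp_add, hlogkey]
      ring_nf
    obtain ⟨h, hh⟩ : ∃ h : ℝ, h = δ - δb := ⟨_, rfl⟩
    have hne : h ≠ 0 := by rw [hh]; exact sub_ne_zero.mpr hδ
    have hE : 0 < Real.exp ((Z - δb * r) / c) := Real.exp_pos _
    have hF : 0 < Real.exp (L * (δb + 1)) := Real.exp_pos _
    have e1 : (-(r / c)) * h + 1 < Real.exp ((-(r / c)) * h) :=
      Real.add_one_lt_exp (by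
        have h0 : r / c ≠ 0 := by positivity
        exact mul_ne_zero (neg_ne_zero.mpr h0) hne)
    have e2 : L * h + 1 ≤ Real.exp (L * h) := Real.add_one_le_exp _
    have split1 : Real.exp ((Z - δ * r) / c)
        = Real.exp ((Z - δb * r) / c) * Real.exp ((-(r / c)) * h) := by
      rw [← Real.exp_add]
      congr 1
      rw [hh]
      field_simp
      ring
    have split2 : Real.exp (L * (δ + 1))
        = Real.exp (L * (δb + 1)) * Real.exp (L * h) := by
      rw [← Real.exp_add]
      congr 1
      rw [hh]
      ring
    have e1' := mul_lt_mul_of_pos_left e1 hE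
    have e2' := mul_le_mul_of_nonneg_left e2 hF.le
    have keyh : h * (r / c * Real.exp ((Z - δb * r) / c))
        = h * (L * Real.exp (L * (δb + 1))) := by rw [key]
    rw [hgform, hgform, split1, split2]
    nlinarith [e1', e2', keyh]
  · rw [div_sub_div_same]
    congr 1
    ring
  · rw [div_eq_div_iff (ne_of_gt hD) (by positivity)]
    field_simp
  · have h1 : c / (r + c * L) < 1 / L := by
      rw [div_lt_div_iff₀ hD hL]
      nlinarith
    have h2 : (1 : ℝ) / L < 1.5 := by
      rw [div_lt_iff₀ hL]
      nlinarith [Real.log_two_gt_d9]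
    linarith
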